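/- For a positive integer n, let s(n) denote the smallest prime that does not divide n. Then the averages (1/N) \sum_{n=1}^{N} s(n) converge as N \to \infty, and their limit equals f_1 = \sum_{k=1}^\infty (p_k - 1)/(p_1 p_2 \cdots p_{k-1}). -/

import Mathlib

open scoped BigOperators

/-- `p k` is the `(k+1)`-st prime, i.e. the paper's `p_{k+1}` (so `p 0 = 2`). -/
noncomputable def p (k : ℕ) : ℕ := Nat.nth Nat.Prime k

/-- The `k`-th summand `(p_{k+1} - 1) / (p_1 ⋯ p_k)` of the series (0-indexed). -/
noncomputable def primeTerm (k : ℕ) : ℝ :=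
  ((p k : ℝ) - 1) / ∏ i ∈ Finset.range k, (p i : ℝ)

/-- `s n` is the smallest prime that does not divide `n`. -/
noncomputable def s (n : ℕ) : ℕ := sInf {q | q.Prime ∧ ¬ q ∣ n}

namespace AuxS8

/-- primorial -/
noncomputable def P (k : ℕ) : ℕ := ∏ i ∈ Finset.range k, p i

lemma pp (k : ℕ) : (p k).Prime := Nat.prime_nth_prime k

lemma p_strictMono : StrictMono p := Nat.nth_strictMono Nat.infinite_setOf_prime

lemma P_succ (k : ℕ) : P (k + 1) = P k * p k := Finset.prod_range_succ _ _

lemma P_pos (k : ℕ) : 0 < P k := Finset.prod_pos fun i _ => (pp i).pos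

lemma two_pow_le_P (k : ℕ) : 2 ^ k ≤ P k := by
  have h : (2:ℕ) ^ k = ∏ _i ∈ Finset.range k, 2 := by
    rw [Finset.prod_const, Finset.card_range]
  rw [h]
  exact Finset.prod_le_prod' fun i _ => (pp i).two_le

lemma coprime_P (k : ℕ) : Nat.Coprime (P k) (p k) :=
  Nat.Coprime.prod_left fun i hi =>
    (Nat.coprime_primes (pp i) (pp k)).mpr (p_strictMono (Finset.mem_range.mp hi)).ne

lemma P_dvd {n k : ℕ} (h : ∀ i < k, p i ∣ n) : P k ∣ n := by
  induction k with
  | zero => simpa [P] using one_dvd n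
  | succ k ih =>
      rw [P_succ]
      exact (coprime_P k).mul_dvd_of_dvd_of_dvd (ih fun i hi => h i (hi.trans (Nat.lt_succ_self k)))
        (h k (Nat.lt_succ_self k))

lemma s_spec {n : ℕ} (hn : n ≠ 0) : (s n).Prime ∧ ¬ s n ∣ n := by
  have hne : {q | q.Prime ∧ ¬ q ∣ n}.Nonempty := by
    obtain ⟨q, hq1, hq2⟩ := Nat.exists_infinite_primes (n + 1)
    exact ⟨q, hq2, fun hdvd => absurd (Nat.le_of_dvd (Nat.pos_of_ne_zero hn) hdvd) (by omega)⟩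
  exact Nat.sInf_mem hne

lemma s_le {n q : ℕ} (hq : q.Prime) (h : ¬ q ∣ n) : s n ≤ q := Nat.sInf_le ⟨hq, h⟩

lemma dvd_of_lt_s {n q : ℕ} (hq : q.Prime) (h : q < s n) : q ∣ n := by
  by_contra hd
  exact absurd (s_le hq hd) (not_le.mpr h)

lemma s_eq_iff {n j : ℕ} (hn : n ≠ 0) : s n = p j ↔ P j ∣ n ∧ ¬ p j ∣ n := by
  constructor
  · intro h
    refine ⟨P_dvd fun i hi => dvd_of_lt_s (pp i) (h ▸ p_strictMono hi), h ▸ (s_spec hn).2⟩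
  · rintro ⟨hP, hp⟩
    refine le_antisymm (s_le (pp j) hp) ?_
    by_contra hlt
    push_neg at hlt
    have hsp := (s_spec hn).1
    have hcount : Nat.nth Nat.Prime (Nat.count Nat.Prime (s n)) = s n := Nat.nth_count hsp
    have hc : Nat.count Nat.Prime (s n) < j := by
      have := (Nat.nth_lt_nth Nat.infinite_setOf_prime (k := Nat.count Nat.Prime (s n)) (n := j)).mp
      apply this
      rw [hcount]; exact hlt
    have hdvdP : s n ∣ P j := by
      conv_lhs => rw [← hcount]
      exact Finset.dvd_prod_of_mem _ (Finset.mem_range.mpr hc)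
    exact (s_spec hn).2 (hdvdP.trans hP)

lemma s_eq_iff' {n j : ℕ} (hn : n ≠ 0) : s n = p j ↔ P j ∣ n ∧ ¬ P (j + 1) ∣ n := by
  rw [s_eq_iff hn]
  constructor
  · rintro ⟨h1, h2⟩
    refine ⟨h1, fun hd => h2 ?_⟩
    exact dvd_trans (dvd_mul_left (p j) (P j)) (by rwa [← P_succ])
  · rintro ⟨h1, h2⟩
    refine ⟨h1, fun hd => h2 ?_⟩
    rw [P_succ]
    exact (coprime_P j).mul_dvd_of_dvd_of_dvd h1 hd

/-- counting function -/
noncomputable def c (N j : ℕ) : ℕ := N / P j - N / P (j + 1)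

lemma card_fiber (N j : ℕ) :
    (Finset.filter (fun n => s n = p j) (Finset.Ioc 0 N)).card = c N j := by
  have hsub : Finset.filter (fun n => P (j + 1) ∣ n) (Finset.Ioc 0 N)
      ⊆ Finset.filter (fun n => P j ∣ n) (Finset.Ioc 0 N) := by
    intro n hn
    simp only [Finset.mem_filter] at hn ⊢
    refine ⟨hn.1, dvd_trans ?_ hn.2⟩
    rw [P_succ]
    exact dvd_mul_right (P j) (p j)
  have key : Finset.filter (fun n => s n = p j) (Finset.Ioc 0 N)
      = Finset.filter (fun n => P j ∣ n) (Finset.Ioc 0 N)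
        \ Finset.filter (fun n => P (j + 1) ∣ n) (Finset.Ioc 0 N) := by
    ext n
    simp only [Finset.mem_sdiff, Finset.mem_filter, Finset.mem_Ioc]
    constructor
    · rintro ⟨hmem, hs⟩
      have hn : n ≠ 0 := by omega
      obtain ⟨h1, h2⟩ := (s_eq_iff' hn).mp hs
      exact ⟨⟨hmem, h1⟩, fun h => h2 h.2⟩
    · rintro ⟨⟨hmem, h1⟩, h2⟩
      have hn : n ≠ 0 := by omega
      refine ⟨hmem, (s_eq_iff' hn).mpr ⟨h1, fun hd => h2 ⟨hmem, hd⟩⟩⟩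
  rw [key, Finset.card_sdiff_of_subset hsub, Nat.Ioc_filter_dvd_card_eq_div,
    Nat.Ioc_filter_dvd_card_eq_div]
  rfl

lemma count_s_lt {n N : ℕ} (hn : 0 < n) (hnN : n ≤ N) :
    Nat.count Nat.Prime (s n) < N := by
  set j := Nat.count Nat.Prime (s n) with hj
  have hsp := (s_spec hn.ne').1
  have hcount : Nat.nth Nat.Prime j = s n := Nat.nth_count hsp
  have hPdvd : P j ∣ n := P_dvd fun i hi => by
    apply dvd_of_lt_s (pp i)
    rw [← hcount]
    exact p_strictMono hi
  have h1 : P j ≤ n := Nat.le_of_dvd hn hPdvd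
  have h2 : j < 2 ^ j := Nat.lt_two_pow_self
  have := two_pow_le_P j
  omega

lemma sum_s (N : ℕ) : ∑ n ∈ Finset.Icc 1 N, s n = ∑ j ∈ Finset.range N, p j * c N j := by
  have hIcc : Finset.Icc 1 N = Finset.Ioc 0 N := rfl
  have hmaps : ∀ n ∈ Finset.Ioc 0 N, Nat.count Nat.Prime (s n) ∈ Finset.range N := by
    intro n hn
    rw [Finset.mem_Ioc] at hn
    exact Finset.mem_range.mpr (count_s_lt hn.1 hn.2)
  rw [hIcc, ← Finset.sum_fiberwise_of_maps_to hmaps (fun n => s n)]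
  refine Finset.sum_congr rfl fun j _ => ?_
  have hfe : Finset.filter (fun n => Nat.count Nat.Prime (s n) = j) (Finset.Ioc 0 N)
      = Finset.filter (fun n => s n = p j) (Finset.Ioc 0 N) := by
    apply Finset.filter_congr
    intro n hn
    rw [Finset.mem_Ioc] at hn
    have hsp := (s_spec (by omega : n ≠ 0)).1
    constructor
    · intro h
      rw [← Nat.nth_count hsp, h]; rfl
    · intro h
      simp only [h]
      exact Nat.count_nth_of_infinite Nat.infinite_setOf_prime j
  rw [hfe]
  rw [Finset.sum_congr rfl fun n hn => (Finset.mem_filter.mp hn).2]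
  rw [Finset.sum_const, card_fiber, smul_eq_mul, mul_comm]

/-- weight, real-valued -/
noncomputable def g (N j : ℕ) : ℝ := (p j : ℝ) * (c N j : ℝ) / N

lemma sum_s_real (N : ℕ) :
    (∑ n ∈ Finset.Icc 1 N, (s n : ℝ)) / N = ∑ j ∈ Finset.range N, g N j := by
  have h : (∑ n ∈ Finset.Icc 1 N, (s n : ℝ)) = ((∑ n ∈ Finset.Icc 1 N, s n : ℕ) : ℝ) := by
    push_cast; rfl
  rw [h, sum_s]
  push_cast
  rw [Finset.sum_div]
  rfl

lemma g_nonneg (N j : ℕ) : 0 ≤ g N j := by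
  unfold g; positivity

lemma div_le_antitone (N j : ℕ) : N / P (j + 1) ≤ N / P j :=
  Nat.div_le_div_left (by rw [P_succ]; exact Nat.le_mul_of_pos_right _ (pp j).pos) (P_pos j)

lemma c_cast (N j : ℕ) :
    (c N j : ℝ) = ((N / P j : ℕ) : ℝ) - ((N / P (j + 1) : ℕ) : ℝ) := by
  have h := div_le_antitone N j
  unfold c
  rw [Nat.cast_sub h]

lemma g_le (N j : ℕ) (hN : 0 < N) : g N j ≤ (p j : ℝ) / P j := by
  have hc : (c N j : ℝ) ≤ (N : ℝ) / P j := by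
    calc (c N j : ℝ) ≤ ((N / P j : ℕ) : ℝ) := by
          exact_mod_cast Nat.cast_le.mpr (Nat.sub_le _ _)
      _ ≤ (N : ℝ) / P j := Nat.cast_div_le
  have hPp : (0:ℝ) < P j := by exact_mod_cast P_pos j
  have hNp : (0:ℝ) < N := by exact_mod_cast hN
  rw [g, div_le_iff₀ hNp]
  calc (p j : ℝ) * (c N j) ≤ (p j : ℝ) * ((N : ℝ) / P j) := by
        exact mul_le_mul_of_nonneg_left hc (by positivity)
    _ = (p j : ℝ) / P j * N := by ring

lemma p_succ_le (j : ℕ) : p (j + 1) ≤ 2 * p j := by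
  obtain ⟨q, hq, h1, h2⟩ := Nat.exists_prime_lt_and_le_two_mul (p j) (pp j).pos.ne'
  have hc : j < Nat.count Nat.Prime q := by
    have hcq : Nat.nth Nat.Prime (Nat.count Nat.Prime q) = q := Nat.nth_count hq
    have h : Nat.nth Nat.Prime j < Nat.nth Nat.Prime (Nat.count Nat.Prime q) := by
      rw [hcq]; exact h1
    exact (Nat.nth_lt_nth Nat.infinite_setOf_prime).mp h
  calc p (j + 1) ≤ Nat.nth Nat.Prime (Nat.count Nat.Prime q) :=
        (Nat.nth_le_nth Nat.infinite_setOf_prime).mpr hc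
    _ = q := Nat.nth_count hq
    _ ≤ 2 * p j := h2

lemma a_le_b (j : ℕ) : (p j : ℝ) / P j ≤ 6 * (2/3) ^ j := by
  induction j with
  | zero =>
      have h1 : p 0 = 2 := Nat.nth_prime_zero_eq_two
      have h2 : P 0 = 1 := rfl
      rw [h1, h2]; norm_num
  | succ j ih =>
      have hPpos : (0:ℝ) < P j := by exact_mod_cast P_pos j
      have hppos : (0:ℝ) < p j := by exact_mod_cast (pp j).pos
      have hps : (p (j+1) : ℝ) ≤ 2 * p j := by exact_mod_cast p_succ_le j
      have hPs : (P (j+1) : ℝ) = P j * p j := by exact_mod_cast P_succ j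
      have hstep : (p (j+1) : ℝ) / P (j+1) ≤ 2 / P j := by
        rw [hPs, div_le_div_iff₀ (by positivity) hPpos]
        calc (p (j+1) : ℝ) * P j ≤ 2 * p j * P j := by
              exact mul_le_mul_of_nonneg_right hps (le_of_lt hPpos)
          _ = 2 * (P j * p j) := by ring
      rcases Nat.eq_zero_or_pos j with hj | hj
      · subst hj
        have h0 : (2:ℝ) / P 0 = 2 := by norm_num [P]
        calc (p 1 : ℝ) / P 1 ≤ 2 / P 0 := hstep
          _ = 2 := h0
          _ ≤ 6 * (2/3) ^ 1 := by norm_num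
      · have hp3 : (3:ℝ) ≤ p j := by
          have h := Nat.add_two_le_nth_prime j
          have h' : j + 2 ≤ p j := h
          exact_mod_cast by omega
        have h1P : (1:ℝ) / P j ≤ 6 * (2/3) ^ j / p j := by
          rw [div_le_div_iff₀ hPpos hppos]
          have hih := ih
          rw [div_le_iff₀ hPpos] at hih
          linarith [hih]
        have h2 : 6 * (2/3:ℝ) ^ j / p j ≤ 6 * (2/3) ^ j / 3 := by
          apply div_le_div_of_nonneg_left (by positivity) (by norm_num) hp3
        calc (p (j+1) : ℝ) / P (j+1) ≤ 2 / P j := hstep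
          _ = 2 * (1 / P j) := by ring
          _ ≤ 2 * (6 * (2/3) ^ j / 3) := by
              have := h1P.trans h2
              linarith
          _ = 6 * (2/3) ^ (j+1) := by ring

lemma primeTerm_eq (j : ℕ) : primeTerm j = ((p j : ℝ) - 1) / P j := by
  unfold primeTerm P
  push_cast
  rfl

lemma primeTerm_nonneg (j : ℕ) : 0 ≤ primeTerm j := by
  rw [primeTerm_eq]
  have h1 : (1:ℝ) ≤ p j := by exact_mod_cast (pp j).one_lt.le
  have h2 : (0:ℝ) < P j := by exact_mod_cast P_pos j
  apply div_nonneg (by linarith) h2.le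

lemma primeTerm_le_b (j : ℕ) : primeTerm j ≤ 6 * (2/3) ^ j := by
  refine le_trans ?_ (a_le_b j)
  rw [primeTerm_eq]
  have h2 : (0:ℝ) < P j := by exact_mod_cast P_pos j
  gcongr
  linarith

lemma summable_b : Summable (fun j => 6 * (2/3:ℝ) ^ j) :=
  (summable_geometric_of_lt_one (by norm_num) (by norm_num)).mul_left 6

lemma summable_primeTerm : Summable primeTerm :=
  Summable.of_nonneg_of_le primeTerm_nonneg primeTerm_le_b summable_b

lemma tendsto_div_nat (m : ℕ) (hm : 0 < m) :
    Filter.Tendsto (fun N : ℕ => ((N / m : ℕ) : ℝ) / N) Filter.atTop (nhds (1 / m)) := by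
  have hmR : (0:ℝ) < m := by exact_mod_cast hm
  have hlow : Filter.Tendsto (fun N : ℕ => 1 / (m:ℝ) - 1 / N) Filter.atTop (nhds (1 / m)) := by
    have h := tendsto_one_div_atTop_nhds_zero_nat (𝕜 := ℝ)
    simpa using tendsto_const_nhds.sub h
  apply tendsto_of_tendsto_of_tendsto_of_le_of_le' hlow tendsto_const_nhds
  · filter_upwards [Filter.eventually_ge_atTop 1] with N hN
    have hNR : (0:ℝ) < N := by exact_mod_cast hN
    have h1n : N < (N / m + 1) * m := by
      have hdm := Nat.div_add_mod N m
      have hr := Nat.mod_lt N hm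
      calc N = m * (N / m) + N % m := hdm.symm
        _ < m * (N / m) + m := by omega
        _ = (N / m + 1) * m := by ring
    have h1 : (N:ℝ) < (((N / m : ℕ) : ℝ) + 1) * m := by exact_mod_cast h1n
    have hd : (N:ℝ)/m - 1 ≤ ((N / m : ℕ) : ℝ) := by
      rw [sub_le_iff_le_add, div_le_iff₀ hmR]
      nlinarith [h1]
    have heq : (1/(m:ℝ) - 1/N) = ((N:ℝ)/m - 1)/N := by field_simp
    rw [heq]
    exact (div_le_div_iff_of_pos_right hNR).mpr hd
  · filter_upwards [Filter.eventually_ge_atTop 1] with N hN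
    have hNR : (0:ℝ) < N := by exact_mod_cast hN
    have h2 : ((N / m : ℕ) : ℝ) * m ≤ N := by
      exact_mod_cast Nat.div_mul_le_self N m
    rw [div_le_div_iff₀ hNR hmR]
    linarith

lemma tendsto_g (j : ℕ) :
    Filter.Tendsto (fun N => g N j) Filter.atTop (nhds (primeTerm j)) := by
  have h1 := tendsto_div_nat (P j) (P_pos j)
  have h2 := tendsto_div_nat (P (j+1)) (P_pos (j+1))
  have h3 : Filter.Tendsto
      (fun N : ℕ => (p j : ℝ) * (((N / P j : ℕ) : ℝ)/N - ((N / P (j+1) : ℕ) : ℝ)/N))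
      Filter.atTop (nhds ((p j : ℝ) * (1 / P j - 1 / P (j+1)))) := (h1.sub h2).const_mul _
  have hval : (p j : ℝ) * (1 / (P j : ℝ) - 1 / (P (j+1) : ℝ)) = primeTerm j := by
    rw [primeTerm_eq]
    have hPs : (P (j+1) : ℝ) = P j * p j := by exact_mod_cast P_succ j
    have hPpos : (0:ℝ) < P j := by exact_mod_cast P_pos j
    have hppos : (0:ℝ) < p j := by exact_mod_cast (pp j).pos
    rw [hPs]
    field_simp
  rw [← hval]
  refine h3.congr fun N => ?_
  rw [g, c_cast]
  ring

end AuxS8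

open AuxS8 in
/-- The averages `(1/N) ∑_{n=1}^N s(n)` converge to
`f_1 = ∑_{k=1}^∞ (p_k - 1)/(p_1 ⋯ p_{k-1})`. -/
theorem statement8 :
    Filter.Tendsto (fun N : ℕ => (∑ n ∈ Finset.Icc 1 N, (s n : ℝ)) / N)
      Filter.atTop (nhds (∑' k, primeTerm k)) := by
  classical
  rw [Metric.tendsto_atTop]
  intro ε hε
  obtain ⟨K, hK⟩ : ∃ K : ℕ, 18 * (2/3:ℝ) ^ K < ε / 3 := by
    have h0 : Filter.Tendsto (fun K : ℕ => 18 * (2/3:ℝ) ^ K) Filter.atTop (nhds 0) := by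
      have h := tendsto_pow_atTop_nhds_zero_of_lt_one (by norm_num : (0:ℝ) ≤ 2/3)
        (by norm_num : (2/3:ℝ) < 1)
      simpa using h.const_mul 18
    exact (h0.eventually (gt_mem_nhds (by positivity : (0:ℝ) < ε/3))).exists
  have hgeo : Summable (fun i : ℕ => (2/3:ℝ) ^ i) :=
    summable_geometric_of_lt_one (by norm_num) (by norm_num)
  have hgeosum : ∑' i : ℕ, (2/3:ℝ) ^ i = 3 := by
    rw [tsum_geometric_of_lt_one (by norm_num) (by norm_num)]
    norm_num
  -- tail of primeTerm
  set T : ℝ := ∑' i : ℕ, primeTerm (i + K) with hT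
  have hsT : Summable (fun i => primeTerm (i + K)) :=
    (summable_nat_add_iff K).mpr summable_primeTerm
  have hsb : Summable (fun i : ℕ => 6 * (2/3:ℝ) ^ (i + K)) := by
    have : (fun i : ℕ => 6 * (2/3:ℝ) ^ (i + K)) = fun i => (2/3:ℝ) ^ i * (6 * (2/3) ^ K) := by
      funext i; rw [pow_add]; ring
    rw [this]
    exact hgeo.mul_right _
  have hbsum : ∑' i : ℕ, 6 * (2/3:ℝ) ^ (i + K) = 18 * (2/3) ^ K := by
    have h : (fun i : ℕ => 6 * (2/3:ℝ) ^ (i + K)) = fun i => (2/3:ℝ) ^ i * (6 * (2/3) ^ K) := by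
      funext i; rw [pow_add]; ring
    rw [h, tsum_mul_right, hgeosum]
    ring
  have hT0 : 0 ≤ T := tsum_nonneg fun i => primeTerm_nonneg _
  have hTle : T ≤ 18 * (2/3:ℝ) ^ K := by
    rw [hT, ← hbsum]
    exact Summable.tsum_le_tsum (fun i => primeTerm_le_b _) hsT hsb
  have hLsplit : (∑' k, primeTerm k)
      = (∑ j ∈ Finset.range K, primeTerm j) + T :=
    (Summable.sum_add_tsum_nat_add K summable_primeTerm).symm
  have hfin : Filter.Tendsto (fun N => ∑ j ∈ Finset.range K, g N j) Filter.atTop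
      (nhds (∑ j ∈ Finset.range K, primeTerm j)) :=
    tendsto_finset_sum _ fun j _ => tendsto_g j
  obtain ⟨N₁, hN₁⟩ := Metric.tendsto_atTop.mp hfin (ε/3) (by positivity)
  refine ⟨max N₁ (K+1), fun N hN => ?_⟩
  have hNK : K ≤ N := by
    have := le_trans (le_max_right N₁ (K+1)) hN
    omega
  have hN0 : 0 < N := by
    have := le_trans (le_max_right N₁ (K+1)) hN
    omega
  -- decomposition of the average
  have hA : (∑ n ∈ Finset.Icc 1 N, (s n : ℝ)) / N
      = (∑ j ∈ Finset.range K, g N j) + ∑ j ∈ Finset.Ico K N, g N j := by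
    rw [sum_s_real, ← Finset.sum_range_add_sum_Ico _ hNK]
  -- bounds on the Ico part
  have hSgI0 : 0 ≤ ∑ j ∈ Finset.Ico K N, g N j :=
    Finset.sum_nonneg fun j _ => g_nonneg _ _
  have hSgIle : ∑ j ∈ Finset.Ico K N, g N j ≤ 18 * (2/3:ℝ) ^ K := by
    calc ∑ j ∈ Finset.Ico K N, g N j ≤ ∑ j ∈ Finset.Ico K N, 6 * (2/3:ℝ) ^ j :=
          Finset.sum_le_sum fun j _ => (g_le N j hN0).trans (a_le_b j)
      _ = ∑ i ∈ Finset.range (N - K), 6 * (2/3:ℝ) ^ (K + i) :=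
          Finset.sum_Ico_eq_sum_range _ _ _
      _ = ∑ i ∈ Finset.range (N - K), 6 * (2/3:ℝ) ^ (i + K) := by
          refine Finset.sum_congr rfl fun i _ => by rw [add_comm]
      _ ≤ ∑' i : ℕ, 6 * (2/3:ℝ) ^ (i + K) :=
          Summable.sum_le_tsum _ (fun i _ => by positivity) hsb
      _ = 18 * (2/3:ℝ) ^ K := hbsum
  have h1 := hN₁ N (le_trans (le_max_left _ _) hN)
  rw [Real.dist_eq] at h1
  rw [Real.dist_eq, hA, hLsplit]
  have habs : |(∑ j ∈ Finset.Ico K N, g N j) - T| ≤ 18 * (2/3:ℝ) ^ K := by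
    rw [abs_le]
    constructor <;> linarith
  calc |((∑ j ∈ Finset.range K, g N j) + ∑ j ∈ Finset.Ico K N, g N j)
        - ((∑ j ∈ Finset.range K, primeTerm j) + T)|
      = |((∑ j ∈ Finset.range K, g N j) - ∑ j ∈ Finset.range K, primeTerm j)
        + ((∑ j ∈ Finset.Ico K N, g N j) - T)| := by ring_nf
    _ ≤ |(∑ j ∈ Finset.range K, g N j) - ∑ j ∈ Finset.range K, primeTerm j|
        + |(∑ j ∈ Finset.Ico K N, g N j) - T| := abs_add_le _ _
    _ < ε := by linarith
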